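/- For n ≥ 2 and d ≥ 1, the (n−1)-st power of I_{(n,d,0),2} (the ideal generated by all degree-d monomials supported on at most 2 variables) equals m^{(n−1)d}, the ((n−1)d)-th power of the maximal ideal m = (x_1,...,x_n). Equivalently, every monomial of degree (n−1)d in n variables is a product of n − 1 monomials of degree d each supported on at most 2 variables. -/

import Mathlib

open MvPolynomial

lemma sum_single_apply {n : ℕ} (a : Fin n) (b : ℕ) :
    (∑ i, (Finsupp.single a b) i) = b := by
  simp [Finsupp.single_apply]

lemma sum_univ_eq_sum_support {n : ℕ} (e : Fin n →₀ ℕ) :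
    (∑ i, e i) = ∑ i ∈ e.support, e i :=
  (Finset.sum_subset (Finset.subset_univ _)
    (fun x _ hx => Finsupp.notMem_support_iff.1 hx)).symm

lemma mon_mem_m_pow {K : Type*} [Field K] {n : ℕ} (e : Fin n →₀ ℕ) :
    (monomial e (1:K)) ∈
      (Ideal.span (Set.range (X : Fin n → MvPolynomial (Fin n) K))) ^ (∑ i, e i) := by
  induction e using Finsupp.induction with
  | zero => simp
  | single_add a b f ha hb ih =>
    have hs : (∑ i, (Finsupp.single a b + f) i) = b + ∑ i, f i := by
      simp [Finsupp.add_apply, Finset.sum_add_distrib, sum_single_apply]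
    rw [hs, pow_add]
    have hm : (monomial (Finsupp.single a b + f) (1:K)) =
        (X a) ^ b * monomial f 1 := by
      rw [X_pow_eq_monomial, monomial_mul, one_mul]
    rw [hm]
    exact Ideal.mul_mem_mul
      (Ideal.pow_mem_pow (Ideal.subset_span (Set.mem_range_self a)) b) ih

lemma key {K : Type*} [Field K] {n d : ℕ} (hd : 1 ≤ d) :
    ∀ k, 1 ≤ k → ∀ e : Fin n →₀ ℕ, e.support.card ≤ k + 1 → (∑ i, e i) = k * d →
      monomial e (1:K) ∈ (Ideal.span {p : MvPolynomial (Fin n) K | ∃ e : Fin n →₀ ℕ,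
        (∑ i, e i) = d ∧ e.support.card ≤ 2 ∧ p = monomial e 1}) ^ k := by
  intro k hk
  induction k, hk using Nat.le_induction with
  | base =>
    intro e hc hs
    rw [pow_one]
    exact Ideal.subset_span ⟨e, by simpa using hs, hc, rfl⟩
  | succ k hk ih =>
    intro e hc hs
    -- common machinery
    have main : ∀ f : Fin n →₀ ℕ, f ≤ e → (∑ i, f i) = d → f.support.card ≤ 2 →
        (e - f).support.card ≤ k + 1 →
        monomial e (1:K) ∈ (Ideal.span {p : MvPolynomial (Fin n) K | ∃ e : Fin n →₀ ℕ,
          (∑ i, e i) = d ∧ e.support.card ≤ 2 ∧ p = monomial e 1}) ^ (k + 1) := by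
      intro f hfe hfd hfc hgc
      have hge : f + (e - f) = e := add_tsub_cancel_of_le hfe
      have hsum : (∑ i, f i) + (∑ i, (e - f) i) = ∑ i, e i := by
        rw [← hge]; simp [Finsupp.add_apply, Finset.sum_add_distrib]
      have harr : (k + 1) * d = d + k * d := by ring
      have hgs : (∑ i, (e - f) i) = k * d := by omega
      have hmem := ih (e - f) hgc hgs
      have hm : monomial e (1:K) = monomial f 1 * monomial (e - f) 1 := by
        rw [monomial_mul, one_mul, hge]
      rw [hm, pow_succ']
      exact Ideal.mul_mem_mul (Ideal.subset_span ⟨f, hfd, hfc, rfl⟩) hmem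
    by_cases hA : e.support.card ≤ k + 1
    · -- some coordinate is ≥ d
      have hbig : ∃ j ∈ e.support, d ≤ e j := by
        by_contra h
        push_neg at h
        have h1 : ∑ i ∈ e.support, e i ≤ e.support.card * (d - 1) := by
          simpa using Finset.sum_le_card_nsmul e.support (fun i => e i) (d - 1)
            (fun x hx => show e x ≤ d - 1 by have := h x hx; omega)
        have h2 : e.support.card * (d - 1) ≤ (k + 1) * (d - 1) :=
          Nat.mul_le_mul_right _ hA
        have h3 : (k + 1) * (d - 1) < (k + 1) * d :=
          (Nat.mul_lt_mul_left (Nat.succ_pos k)).2 (by omega)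
        rw [sum_univ_eq_sum_support] at hs
        omega
      obtain ⟨j, hj, hjd⟩ := hbig
      apply main (Finsupp.single j d)
      · rw [Finsupp.le_def]
        intro i
        rw [Finsupp.single_apply]
        split
        · next h => subst h; exact hjd
        · exact Nat.zero_le _
      · exact sum_single_apply j d
      · exact le_trans (Finset.card_le_card Finsupp.support_single_subset) (by norm_num)
      · exact le_trans (Finset.card_le_card Finsupp.support_tsub) hA
    · -- support has exactly k+2 elements
      have hcard : e.support.card = k + 2 := by omega
      have hne : e.support.Nonempty := Finset.card_pos.1 (by omega)
      obtain ⟨i, hi, hmin⟩ := Finset.exists_min_image e.support (fun x => e x) hne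
      have hne2 : (e.support.erase i).Nonempty := by
        rw [← Finset.card_pos, Finset.card_erase_of_mem hi]; omega
      obtain ⟨j, hj, hmax⟩ := Finset.exists_max_image (e.support.erase i) (fun x => e x) hne2
      have hij : i ≠ j := fun h => (Finset.ne_of_mem_erase hj) h.symm
      have hje : j ∈ e.support := Finset.mem_of_mem_erase hj
      have hi1 : 1 ≤ e i := Nat.one_le_iff_ne_zero.2 (Finsupp.mem_support_iff.1 hi)
      -- e i ≤ d
      have heid : e i ≤ d := by
        have h1 : e.support.card * e i ≤ ∑ x ∈ e.support, e x := by
          simpa using Finset.card_nsmul_le_sum e.support (fun x => e x) (e i)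
            (fun x hx => hmin x hx)
        rw [← sum_univ_eq_sum_support, hs, hcard] at h1
        by_contra h
        push_neg at h
        have h2 : (k + 2) * (d + 1) ≤ (k + 2) * e i := Nat.mul_le_mul_left _ (by omega)
        have h3 : (k + 2) * (d + 1) = (k+2) * d + (k + 2) := by ring
        have h4 : (k + 2) * d = (k + 1) * d + d := by ring
        omega
      -- d ≤ e i + e j
      have hdij : d ≤ e i + e j := by
        by_contra h
        push_neg at h
        have hsplit : ∑ x ∈ e.support, e x = e i + ∑ x ∈ e.support.erase i, e x :=
          (Finset.add_sum_erase _ _ hi).symm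
        have h1 : ∑ x ∈ e.support.erase i, e x ≤ (e.support.erase i).card * e j := by
          simpa using Finset.sum_le_card_nsmul _ (fun x => e x) (e j)
            (fun x hx => hmax x hx)
        rw [Finset.card_erase_of_mem hi, hcard] at h1
        norm_num at h1
        have h2 : (k + 1) * (e j + e i + 1) ≤ (k + 1) * d :=
          Nat.mul_le_mul_left _ (by omega)
        have h3 : (k + 1) * (e j + e i + 1) =
            (k + 1) * e j + (k + 1) * e i + (k + 1) := by ring
        have h4 : e i ≤ (k + 1) * e i := Nat.le_mul_of_pos_left _ (Nat.succ_pos k)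
        rw [← sum_univ_eq_sum_support, hs] at hsplit
        omega
      -- the factor
      set f : Fin n →₀ ℕ := Finsupp.single i (e i) + Finsupp.single j (d - e i) with hf
      have hfi : f i = e i := by
        simp [hf, Finsupp.single_apply, hij, (Ne.symm hij)]
      have hfj : f j = d - e i := by
        simp [hf, Finsupp.single_apply, hij, (Ne.symm hij)]
      have hfo : ∀ x, x ≠ i → x ≠ j → f x = 0 := by
        intro x hxi hxj
        simp [hf, Finsupp.single_apply, (Ne.symm hxi), (Ne.symm hxj)]
      have hfe : f ≤ e := by
        rw [Finsupp.le_def]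
        intro x
        by_cases hxi : x = i
        · subst hxi; rw [hfi]
        · by_cases hxj : x = j
          · subst hxj; rw [hfj]; omega
          · rw [hfo x hxi hxj]; exact Nat.zero_le _
      apply main f hfe
      · have hss : (∑ x, f x) = (∑ x, (Finsupp.single i (e i)) x) +
            ∑ x, (Finsupp.single j (d - e i)) x := by
          rw [hf]
          rw [← Finset.sum_add_distrib]
          exact Finset.sum_congr rfl (fun x _ => Finsupp.add_apply _ _ _)
        rw [hss, sum_single_apply, sum_single_apply]
        omega
      · calc f.support.card ≤ ({i, j} : Finset (Fin n)).card := by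
              apply Finset.card_le_card
              intro x hx
              rw [Finsupp.mem_support_iff] at hx
              by_contra hmem
              simp only [Finset.mem_insert, Finset.mem_singleton, not_or] at hmem
              exact hx (hfo x hmem.1 hmem.2)
          _ ≤ 2 := Finset.card_insert_le _ _ |>.trans (by simp)
      · have hsub : (e - f).support ⊆ e.support.erase i := by
          intro x hx
          rw [Finsupp.mem_support_iff, Finsupp.tsub_apply] at hx
          rw [Finset.mem_erase, Finsupp.mem_support_iff]
          constructor
          · intro h; subst h; rw [hfi] at hx; omega
          · intro h; rw [h] at hx; omega
        calc (e - f).support.card ≤ (e.support.erase i).card := Finset.card_le_card hsub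
          _ ≤ k + 1 := by rw [Finset.card_erase_of_mem hi]; omega

lemma m_pow_le {K : Type*} [Field K] {n : ℕ} (N : ℕ) :
    (Ideal.span (Set.range (X : Fin n → MvPolynomial (Fin n) K))) ^ N ≤
      Ideal.span {p : MvPolynomial (Fin n) K |
        ∃ e : Fin n →₀ ℕ, (∑ i, e i) = N ∧ p = monomial e 1} := by
  induction N with
  | zero =>
    rw [pow_zero, Ideal.one_eq_top, top_le_iff, Ideal.eq_top_iff_one]
    apply Ideal.subset_span
    exact ⟨0, by simp, by simp⟩
  | succ N ih =>
    rw [pow_succ']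
    calc (Ideal.span (Set.range (X : Fin n → MvPolynomial (Fin n) K))) *
          (Ideal.span (Set.range (X : Fin n → MvPolynomial (Fin n) K))) ^ N ≤
        (Ideal.span (Set.range (X : Fin n → MvPolynomial (Fin n) K))) *
          Ideal.span {p : MvPolynomial (Fin n) K |
            ∃ e : Fin n →₀ ℕ, (∑ i, e i) = N ∧ p = monomial e 1} :=
          Ideal.mul_mono le_rfl ih
      _ ≤ _ := by
          rw [Ideal.span_mul_span]
          apply Ideal.span_le.2
          rintro x hx
          rw [Set.mem_mul] at hx
          obtain ⟨s, ⟨i, rfl⟩, t, ⟨e, he, rfl⟩, hx⟩ := hx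
          subst hx
          apply Ideal.subset_span
          refine ⟨Finsupp.single i 1 + e, ?_, ?_⟩
          · simp [Finsupp.add_apply, Finset.sum_add_distrib, sum_single_apply, he, add_comm]
          · rw [X, monomial_mul, one_mul]

/-- For `n ≥ 2`, `d ≥ 1`, the `(n-1)`-st power of
`I_{(n,d,0),2}` (generated by all degree-`d` monomials supported on at most
two variables) equals `m^{(n-1)d}`, where `m = (x₁,…,x_n)`. -/
theorem stmt_17 (K : Type*) [Field K] (n d : ℕ) (hn : 2 ≤ n) (hd : 1 ≤ d) :
    (Ideal.span {p : MvPolynomial (Fin n) K | ∃ e : Fin n →₀ ℕ,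
        (∑ i, e i) = d ∧ e.support.card ≤ 2 ∧ p = monomial e 1}) ^ (n - 1) =
      (Ideal.span (Set.range (X : Fin n → MvPolynomial (Fin n) K))) ^
        ((n - 1) * d) := by
  apply le_antisymm
  · have hI : (Ideal.span {p : MvPolynomial (Fin n) K | ∃ e : Fin n →₀ ℕ,
        (∑ i, e i) = d ∧ e.support.card ≤ 2 ∧ p = monomial e 1}) ≤
        (Ideal.span (Set.range (X : Fin n → MvPolynomial (Fin n) K))) ^ d := by
      rw [Ideal.span_le]
      rintro p ⟨e, he, -, rfl⟩
      rw [← he]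
      exact mon_mem_m_pow e
    calc (Ideal.span {p : MvPolynomial (Fin n) K | ∃ e : Fin n →₀ ℕ,
          (∑ i, e i) = d ∧ e.support.card ≤ 2 ∧ p = monomial e 1}) ^ (n - 1) ≤
        ((Ideal.span (Set.range (X : Fin n → MvPolynomial (Fin n) K))) ^ d) ^ (n - 1) :=
          Ideal.pow_right_mono hI _
      _ = _ := by rw [← pow_mul, mul_comm]
  · calc (Ideal.span (Set.range (X : Fin n → MvPolynomial (Fin n) K))) ^ ((n - 1) * d) ≤
        Ideal.span {p : MvPolynomial (Fin n) K |
          ∃ e : Fin n →₀ ℕ, (∑ i, e i) = (n - 1) * d ∧ p = monomial e 1} := m_pow_le _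
      _ ≤ _ := by
        rw [Ideal.span_le]
        rintro p ⟨e, he, rfl⟩
        refine key hd (n - 1) (by omega) e ?_ he
        have h1 : e.support.card ≤ n := by
          have := Finset.card_le_univ e.support
          simpa using this
        omega
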